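/- arXiv:1701.05966 — 2 statements merged into one kernel-verified Lean document; each statement's English description precedes it below -/
import Mathlib

section
/- Let (M, g) be a functional setting where ζ satisfies Normalization, Vanishing on displaceable-supported functions, and the Poisson bracket inequality |ζ(f+g) − ζ(f) − ζ(g)| ≤ √(2 S(f,g) ‖{f,g}‖) with S(f,g) ≤ w for all relevant pairs. If F₁, …, F_N is a partition of unity on M with each supp(F_i) displaceable and the partial sums G_k = F₁ + ⋯ + F_k satisfy ‖{G_k, F_{k+1}}‖ ≤ pb(F) for all k, then 1 ≤ N √(2 w · pb(F)), i.e. pb(F) ≥ 1/(2 N² w). -/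
open Finset

/-- Polterovich's lower bound (abstract form). Let `ζ` satisfy normalization,
vanishing on the members `F_k` of a partition of unity with displaceable supports,
and the Poisson bracket inequality
`|ζ(f+g) − ζ(f) − ζ(g)| ≤ √(2 S(f,g) ‖{f,g}‖)`. If for the partial sums
`G_k = F_1 + ⋯ + F_k` one has `S(G_k, F_{k+1}) ≤ w` and
`‖{G_k, F_{k+1}}‖ ≤ pb(F)`, then `1 ≤ N √(2 w pb(F))`, i.e.
`pb(F) ≥ 1/(2 N² w)`. -/
theorem polterovich_lower_bound {M : Type*}
    (ζ : (M → ℝ) → ℝ) (S : (M → ℝ) → (M → ℝ) → ℝ) (nbr : (M → ℝ) → (M → ℝ) → ℝ)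
    (hS0 : ∀ f g, 0 ≤ S f g) (hnbr0 : ∀ f g, 0 ≤ nbr f g)
    (hPB : ∀ f g : M → ℝ, |ζ (f + g) - ζ f - ζ g| ≤ Real.sqrt (2 * S f g * nbr f g))
    (hone : ζ 1 = 1)
    (N : ℕ) (hN : 1 ≤ N) (F : ℕ → (M → ℝ))
    (hFnn : ∀ k, 1 ≤ k → k ≤ N → ∀ x, 0 ≤ F k x)
    (hpart : (∑ k ∈ Finset.Icc 1 N, F k) = 1)
    (hvanish : ∀ k, 1 ≤ k → k ≤ N → ζ (F k) = 0)
    (w : ℝ) (hw : 0 < w) (pbF : ℝ) (hpbF : 0 ≤ pbF)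
    (hSw : ∀ k, 1 ≤ k → k < N → S (∑ i ∈ Finset.Icc 1 k, F i) (F (k + 1)) ≤ w)
    (hnbrpb : ∀ k, 1 ≤ k → k < N →
      nbr (∑ i ∈ Finset.Icc 1 k, F i) (F (k + 1)) ≤ pbF) :
    1 ≤ (N : ℝ) * Real.sqrt (2 * w * pbF) ∧ 1 / (2 * (N : ℝ) ^ 2 * w) ≤ pbF := by
  set c := Real.sqrt (2 * w * pbF) with hc
  have hc0 : 0 ≤ c := Real.sqrt_nonneg _
  -- step bound
  have key : ∀ k, 1 ≤ k → k ≤ N → ζ (∑ i ∈ Finset.Icc 1 k, F i) ≤ (k - 1 : ℝ) * c := by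
    intro k
    induction k with
    | zero => intro h; omega
    | succ n ih =>
      intro _ hle
      rcases Nat.eq_zero_or_pos n with hn0 | hn1
      · subst hn0
        simp only [Finset.Icc_self, Finset.sum_singleton]
        rw [hvanish 1 le_rfl hle]
        norm_num
      · have hnN : n < N := Nat.lt_of_succ_le hle
        have hsum : (∑ i ∈ Finset.Icc 1 (n + 1), F i)
            = (∑ i ∈ Finset.Icc 1 n, F i) + F (n + 1) := by
          rw [← Finset.sum_Icc_succ_top (by omega : 1 ≤ n + 1)]
        have hstep : Real.sqrt (2 * S (∑ i ∈ Finset.Icc 1 n, F i) (F (n + 1))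
            * nbr (∑ i ∈ Finset.Icc 1 n, F i) (F (n + 1))) ≤ c := by
          apply Real.sqrt_le_sqrt
          have h1 := hSw n hn1 hnN
          have h2 := hnbrpb n hn1 hnN
          have := mul_le_mul h1 h2 (hnbr0 _ _) hw.le
          nlinarith
        have hPB' := hPB (∑ i ∈ Finset.Icc 1 n, F i) (F (n + 1))
        have hvan := hvanish (n + 1) (by omega) hle
        have hih := ih hn1 hnN.le
        have habs := abs_le.mp hPB'
        rw [← hsum] at habs
        push_cast
        nlinarith [habs.2]
  have h1N : 1 ≤ (N : ℝ) * c := by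
    have := key N hN le_rfl
    rw [hpart, hone] at this
    have hNc : ((N : ℝ) - 1) * c ≤ (N : ℝ) * c := by nlinarith
    linarith
  refine ⟨h1N, ?_⟩
  have hcsq : c ^ 2 = 2 * w * pbF := Real.sq_sqrt (by positivity)
  have hN1 : (1 : ℝ) ≤ (N : ℝ) := by exact_mod_cast hN
  have h2 : 1 ≤ (N : ℝ) ^ 2 * (2 * w * pbF) := by nlinarith
  rw [div_le_iff₀ (by positivity)]
  nlinarith
end

section
/- The Hilbert space-filling curve c_H : [0,1] → [0,1]² is measure-preserving: the pushforward of the Lebesgue probability measure on [0,1] under c_H equals the Lebesgue probability measure on [0,1]². In particular, c_H maps each dyadic interval [m/4ⁿ, (m+1)/4ⁿ] onto a dyadic square of area 1/4ⁿ, and μ₁(c_H⁻¹(E)) = μ₂(E) for every Borel set E ⊆ [0,1]². -/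
open MeasureTheory Set Filter

lemma hc_cover (N : ℕ) {x : ℝ} (hx : x ∈ Icc (0:ℝ) 1) :
    ∃ m : ℕ, m < 4 ^ N ∧ x ∈ Icc ((m : ℝ) / 4 ^ N) (((m : ℝ) + 1) / 4 ^ N) := by
  have h4 : (0:ℝ) < 4 ^ N := by positivity
  have h4' : 1 ≤ 4 ^ N := Nat.one_le_pow _ _ (by norm_num)
  refine ⟨min ⌊x * 4 ^ N⌋₊ (4 ^ N - 1), by omega, ?_, ?_⟩
  · rw [div_le_iff₀ h4]
    calc ((min ⌊x * 4 ^ N⌋₊ (4 ^ N - 1) : ℕ) : ℝ) ≤ (⌊x * 4 ^ N⌋₊ : ℝ) := by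
          exact_mod_cast Nat.cast_le.mpr (min_le_left _ _)
      _ ≤ x * 4 ^ N := Nat.floor_le (mul_nonneg hx.1 (le_of_lt h4))
  · rw [le_div_iff₀ h4]
    rcases le_or_gt ⌊x * 4 ^ N⌋₊ (4 ^ N - 1) with h | h
    · rw [min_eq_left h]
      have := Nat.lt_floor_add_one (x * 4 ^ N)
      push_cast at this ⊢
      linarith
    · rw [min_eq_right (by omega)]
      have hx4 : x * 4 ^ N ≤ 4 ^ N := by nlinarith [hx.2]
      push_cast
      have : ((4:ℝ) ^ N - 1) + 1 = 4 ^ N := by ring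
      calc x * 4 ^ N ≤ 4 ^ N := hx4
        _ = ((4 ^ N - 1 : ℕ) : ℝ) + 1 := by
            push_cast [Nat.cast_sub h4']
            ring


lemma hc_surjF (cH : ℝ → ℝ × ℝ)
    (hsurj : cH '' Set.Icc (0:ℝ) 1 = Set.Icc (0:ℝ) 1 ×ˢ Set.Icc (0:ℝ) 1)
    (pa pb : ℕ → ℕ → ℕ) (N : ℕ)
    (hpa : ∀ n m : ℕ, m < 4 ^ n → pa n m < 2 ^ n) (hpb : ∀ n m : ℕ, m < 4 ^ n → pb n m < 2 ^ n)
    (himg : ∀ n m : ℕ, m < 4 ^ n →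
      cH '' Set.Icc ((m : ℝ) / 4 ^ n) (((m : ℝ) + 1) / 4 ^ n)
        = Set.Icc ((pa n m : ℝ) / 2 ^ n) (((pa n m : ℝ) + 1) / 2 ^ n) ×ˢ
          Set.Icc ((pb n m : ℝ) / 2 ^ n) (((pb n m : ℝ) + 1) / 2 ^ n)) :
    (∀ i j : ℕ, i < 2 ^ N → j < 2 ^ N → ∃ m, m < 4 ^ N ∧ pa N m = i ∧ pb N m = j) ∧
    (∀ m m' : ℕ, m < 4 ^ N → m' < 4 ^ N → pa N m = pa N m' → pb N m = pb N m' → m = m') := by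

  have h2 : (0:ℝ) < 2 ^ N := by positivity
  -- image membership
  have hIm : ∀ m : ℕ, m < 4 ^ N → ∀ x ∈ Icc ((m : ℝ) / 4 ^ N) (((m : ℝ) + 1) / 4 ^ N),
      cH x ∈ Icc ((pa N m : ℝ) / 2 ^ N) (((pa N m : ℝ) + 1) / 2 ^ N) ×ˢ
        Icc ((pb N m : ℝ) / 2 ^ N) (((pb N m : ℝ) + 1) / 2 ^ N) := by
    intro m hm x hx
    rw [← himg N m hm]
    exact mem_image_of_mem _ hx
  -- surjectivity of m ↦ (pa N m, pb N m)
  have hsurjF : ∀ i j : ℕ, i < 2 ^ N → j < 2 ^ N →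
      ∃ m, m < 4 ^ N ∧ pa N m = i ∧ pb N m = j := by
    intro i j hi hj
    set p : ℝ × ℝ := (((i : ℝ) + 2⁻¹) / 2 ^ N, ((j : ℝ) + 2⁻¹) / 2 ^ N) with hp
    have hmem : ∀ c : ℕ, c < 2 ^ N → ((c : ℝ) + 2⁻¹) / 2 ^ N ∈ Icc (0:ℝ) 1 := by
      intro c hc
      constructor
      · positivity
      · rw [div_le_one h2]
        have : (c : ℝ) + 1 ≤ 2 ^ N := by exact_mod_cast Nat.succ_le_of_lt hc
        linarith
    have hp2 : p ∈ cH '' Icc (0:ℝ) 1 := by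
      rw [hsurj]; exact ⟨hmem i hi, hmem j hj⟩
    obtain ⟨x, hx, hcx⟩ := hp2
    obtain ⟨m, hm, hxm⟩ := hc_cover N hx
    refine ⟨m, hm, ?_, ?_⟩
    · have h := hIm m hm x hxm
      rw [hcx] at h
      have h1 := h.1.1
      have h2' := h.1.2
      rw [div_le_div_iff₀ h2 h2] at h1
      rw [div_le_div_iff₀ h2 h2] at h2'
      have e1 : (pa N m : ℝ) ≤ (i : ℝ) + 2⁻¹ := by nlinarith
      have e2 : (i : ℝ) + 2⁻¹ ≤ (pa N m : ℝ) + 1 := by nlinarith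
      have : pa N m ≤ i := by
        by_contra hcon
        push_neg at hcon
        have : (i : ℝ) + 1 ≤ pa N m := by exact_mod_cast Nat.succ_le_of_lt hcon
        linarith
      have : i ≤ pa N m := by
        by_contra hcon
        push_neg at hcon
        have : (pa N m : ℝ) + 1 ≤ i := by exact_mod_cast Nat.succ_le_of_lt hcon
        linarith
      omega
    · have h := hIm m hm x hxm
      rw [hcx] at h
      have h1 := h.2.1
      have h2' := h.2.2
      rw [div_le_div_iff₀ h2 h2] at h1
      rw [div_le_div_iff₀ h2 h2] at h2'
      have e1 : (pb N m : ℝ) ≤ (j : ℝ) + 2⁻¹ := by nlinarith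
      have e2 : (j : ℝ) + 2⁻¹ ≤ (pb N m : ℝ) + 1 := by nlinarith
      have : pb N m ≤ j := by
        by_contra hcon
        push_neg at hcon
        have : (j : ℝ) + 1 ≤ pb N m := by exact_mod_cast Nat.succ_le_of_lt hcon
        linarith
      have : j ≤ pb N m := by
        by_contra hcon
        push_neg at hcon
        have : (pb N m : ℝ) + 1 ≤ j := by exact_mod_cast Nat.succ_le_of_lt hcon
        linarith
      omega
  -- injectivity
  have hinjF : ∀ m m', m < 4 ^ N → m' < 4 ^ N → pa N m = pa N m' → pb N m = pb N m' → m = m' := by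
    intro m m' hm hm' hA hB
    set F : Fin (4 ^ N) → Fin (2 ^ N) × Fin (2 ^ N) :=
      fun k => (⟨pa N k, hpa N k k.2⟩, ⟨pb N k, hpb N k k.2⟩) with hF
    have hsF : Function.Surjective F := by
      rintro ⟨⟨i, hi⟩, ⟨j, hj⟩⟩
      obtain ⟨m0, hm0, h1, h2⟩ := hsurjF i j hi hj
      exact ⟨⟨m0, hm0⟩, by simp [hF, h1, h2]⟩
    have hcard : Fintype.card (Fin (4 ^ N)) = Fintype.card (Fin (2 ^ N) × Fin (2 ^ N)) := by
      simp only [Fintype.card_prod, Fintype.card_fin]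
      rw [← Nat.mul_pow]
    have hbij : Function.Bijective F :=
      (Fintype.bijective_iff_surjective_and_card F).mpr ⟨hsF, hcard⟩
    have : F ⟨m, hm⟩ = F ⟨m', hm'⟩ := by
      simp only [hF, Prod.mk.injEq, Fin.mk.injEq]
      exact ⟨hA, hB⟩
    have := hbij.1 this
    simpa using congrArg Fin.val this
  exact ⟨hsurjF, hinjF⟩

lemma hc_key (cH : ℝ → ℝ × ℝ)
    (hsurj : cH '' Set.Icc (0:ℝ) 1 = Set.Icc (0:ℝ) 1 ×ˢ Set.Icc (0:ℝ) 1)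
    (pa pb : ℕ → ℕ → ℕ)
    (hpa : ∀ n m : ℕ, m < 4 ^ n → pa n m < 2 ^ n) (hpb : ∀ n m : ℕ, m < 4 ^ n → pb n m < 2 ^ n)
    (himg : ∀ n m : ℕ, m < 4 ^ n →
      cH '' Set.Icc ((m : ℝ) / 4 ^ n) (((m : ℝ) + 1) / 4 ^ n)
        = Set.Icc ((pa n m : ℝ) / 2 ^ n) (((pa n m : ℝ) + 1) / 2 ^ n) ×ˢ
          Set.Icc ((pb n m : ℝ) / 2 ^ n) (((pb n m : ℝ) + 1) / 2 ^ n))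
    (hsurjF : ∀ N i j : ℕ, i < 2 ^ N → j < 2 ^ N →
      ∃ m, m < 4 ^ N ∧ pa N m = i ∧ pb N m = j)
    (hinjF : ∀ N m m' : ℕ, m < 4 ^ N → m' < 4 ^ N → pa N m = pa N m' → pb N m = pb N m' →
      m = m')
    {a b : ℝ} (ha : a ∈ Icc (0:ℝ) 1) (hb : b ∈ Icc (0:ℝ) 1) :
    volume (cH ⁻¹' (Iic a ×ˢ Iic b) ∩ Icc (0:ℝ) 1) = ENNReal.ofReal (a * b) := by
  set P : Set ℝ := cH ⁻¹' (Iic a ×ˢ Iic b) ∩ Icc (0:ℝ) 1 with hP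
  have hPsub : P ⊆ Icc (0:ℝ) 1 := inter_subset_right
  have hPtop : volume P ≠ ⊤ := by
    refine ne_top_of_le_ne_top ?_ (measure_mono hPsub)
    simp [Real.volume_Icc]
  set v : ℝ := (volume P).toReal with hv
  -- per-level facts
  have hIm : ∀ N m : ℕ, m < 4 ^ N → ∀ x ∈ Icc ((m : ℝ) / 4 ^ N) (((m : ℝ) + 1) / 4 ^ N),
      cH x ∈ Icc ((pa N m : ℝ) / 2 ^ N) (((pa N m : ℝ) + 1) / 2 ^ N) ×ˢ
        Icc ((pb N m : ℝ) / 2 ^ N) (((pb N m : ℝ) + 1) / 2 ^ N) := by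
    intro N m hm x hx
    rw [← himg N m hm]
    exact mem_image_of_mem _ hx
  have hIooDisj : ∀ N u w : ℕ, u ≠ w →
      Disjoint (Ioo ((u:ℝ)/4^N) (((u:ℝ)+1)/4^N)) (Ioo ((w:ℝ)/4^N) (((w:ℝ)+1)/4^N)) := by
    intro N u w huw
    have h4 : (0:ℝ) < 4 ^ N := by positivity
    rw [Set.disjoint_left]
    rintro x ⟨hx1, hx2⟩ ⟨hx3, hx4⟩
    rcases Nat.lt_or_ge u w with h | h
    · have h1 : (u:ℝ) + 1 ≤ w := by exact_mod_cast Nat.succ_le_of_lt h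
      have : ((u:ℝ)+1)/4^N ≤ (w:ℝ)/4^N := by gcongr
      linarith
    · have hwu : w < u := lt_of_le_of_ne h (Ne.symm huw)
      have h1 : (w:ℝ) + 1 ≤ u := by exact_mod_cast Nat.succ_le_of_lt hwu
      have : ((w:ℝ)+1)/4^N ≤ (u:ℝ)/4^N := by gcongr
      linarith
  -- lower and upper bounds for each N
  have hbound : ∀ N : ℕ,
      ((⌊a * 2^N⌋₊ : ℝ) * ⌊b * 2^N⌋₊) / 4^N ≤ v ∧
      v ≤ (((⌊a * 2^N⌋₊ : ℝ) + 1) * ((⌊b * 2^N⌋₊ : ℝ) + 1)) / 4^N := by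
    intro N
    have h2 : (0:ℝ) < 2 ^ N := by positivity
    have h4 : (0:ℝ) < 4 ^ N := by positivity
    set k := ⌊a * 2^N⌋₊ with hk
    set l := ⌊b * 2^N⌋₊ with hl
    have hk2 : k ≤ 2 ^ N := by
      have : (k:ℝ) ≤ a * 2^N := Nat.floor_le (mul_nonneg ha.1 h2.le)
      have h2' : a * 2^N ≤ 2^N := by nlinarith [ha.2]
      exact_mod_cast Nat.cast_le.mp (by push_cast; linarith : (k:ℝ) ≤ ((2^N : ℕ) : ℝ))
    have hl2 : l ≤ 2 ^ N := by
      have : (l:ℝ) ≤ b * 2^N := Nat.floor_le (mul_nonneg hb.1 h2.le)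
      have h2' : b * 2^N ≤ 2^N := by nlinarith [hb.2]
      exact_mod_cast Nat.cast_le.mp (by push_cast; linarith : (l:ℝ) ≤ ((2^N : ℕ) : ℝ))
    constructor
    · -- LOWER BOUND
      have hch : ∀ p : ℕ × ℕ, p ∈ (Finset.range k ×ˢ Finset.range l) →
          ∃ m, m < 4 ^ N ∧ pa N m = p.1 ∧ pb N m = p.2 := by
        intro p hp
        rw [Finset.mem_product, Finset.mem_range, Finset.mem_range] at hp
        exact hsurjF N p.1 p.2 (lt_of_lt_of_le hp.1 hk2) (lt_of_lt_of_le hp.2 hl2)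
      choose! g hg1 hg2 hg3 using hch
      set T := (Finset.range k ×ˢ Finset.range l : Finset (ℕ × ℕ)) with hT
      have hsub : (⋃ p ∈ T, Ioo ((g p : ℝ)/4^N) (((g p : ℝ)+1)/4^N)) ⊆ P := by
        intro x hx
        simp only [mem_iUnion, exists_prop] at hx
        obtain ⟨p, hpT, hxp⟩ := hx
        have hgm := hg1 p hpT
        have hxIcc : x ∈ Icc ((g p : ℝ)/4^N) (((g p : ℝ)+1)/4^N) := Ioo_subset_Icc_self hxp
        have hx01 : x ∈ Icc (0:ℝ) 1 := by
          constructor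
          · have : (0:ℝ) ≤ (g p : ℝ)/4^N := by positivity
            linarith [hxIcc.1]
          · have hgp : (g p : ℝ) + 1 ≤ 4^N := by
              exact_mod_cast Nat.succ_le_of_lt hgm
            have : ((g p : ℝ)+1)/4^N ≤ 1 := by
              rw [div_le_one h4]; exact hgp
            linarith [hxIcc.2]
        refine ⟨?_, hx01⟩
        have hc := hIm N (g p) hgm x hxIcc
        have hpT' := hpT
        rw [hT, Finset.mem_product, Finset.mem_range, Finset.mem_range] at hpT'
        constructor
        · have h1 : (cH x).1 ≤ ((pa N (g p) : ℝ) + 1) / 2^N := hc.1.2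
          have h2' : ((pa N (g p) : ℝ) + 1) ≤ a * 2^N := by
            rw [hg2 p hpT]
            have e1 : (p.1 : ℝ) + 1 ≤ (k : ℝ) := by exact_mod_cast Nat.succ_le_of_lt hpT'.1
            have e2 : (k : ℝ) ≤ a * 2^N := Nat.floor_le (mul_nonneg ha.1 h2.le)
            linarith
          have : ((pa N (g p) : ℝ) + 1) / 2^N ≤ a := by
            rw [div_le_iff₀ h2]; linarith
          exact le_trans h1 this
        · have h1 : (cH x).2 ≤ ((pb N (g p) : ℝ) + 1) / 2^N := hc.2.2
          have h2' : ((pb N (g p) : ℝ) + 1) ≤ b * 2^N := by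
            rw [hg3 p hpT]
            have e1 : (p.2 : ℝ) + 1 ≤ (l : ℝ) := by exact_mod_cast Nat.succ_le_of_lt hpT'.2
            have e2 : (l : ℝ) ≤ b * 2^N := Nat.floor_le (mul_nonneg hb.1 h2.le)
            linarith
          have : ((pb N (g p) : ℝ) + 1) / 2^N ≤ b := by
            rw [div_le_iff₀ h2]; linarith
          exact le_trans h1 this
      have hgInj : ∀ p ∈ T, ∀ q ∈ T, p ≠ q → g p ≠ g q := by
        intro p hp q hq hpq hgg
        apply hpq
        have e1 : pa N (g p) = p.1 := hg2 p hp
        have e2 : pa N (g q) = q.1 := hg2 q hq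
        have e3 : pb N (g p) = p.2 := hg3 p hp
        have e4 : pb N (g q) = q.2 := hg3 q hq
        rw [hgg] at e1 e3
        exact Prod.ext (e1 ▸ e2 ▸ rfl) (e3 ▸ e4 ▸ rfl)
      have hdisj : (T : Set (ℕ × ℕ)).PairwiseDisjoint
          (fun p => Ioo ((g p : ℝ)/4^N) (((g p : ℝ)+1)/4^N)) := by
        intro p hp q hq hpq
        exact hIooDisj N (g p) (g q) (hgInj p hp q hq hpq)
      have hmeas : volume (⋃ p ∈ T, Ioo ((g p : ℝ)/4^N) (((g p : ℝ)+1)/4^N))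
          = ∑ p ∈ T, volume (Ioo ((g p : ℝ)/4^N) (((g p : ℝ)+1)/4^N)) :=
        measure_biUnion_finset hdisj (fun p _ => measurableSet_Ioo)
      have hsum : ∑ p ∈ T, volume (Ioo ((g p : ℝ)/4^N) (((g p : ℝ)+1)/4^N))
          = ENNReal.ofReal (((k : ℝ) * l) / 4^N) := by
        have heach : ∀ p ∈ T, volume (Ioo ((g p : ℝ)/4^N) (((g p : ℝ)+1)/4^N))
            = ENNReal.ofReal (1 / 4^N) := by
          intro p _
          rw [Real.volume_Ioo]
          congr 1
          field_simp
          ring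
        rw [Finset.sum_congr rfl heach, Finset.sum_const]
        have hTcard : T.card = k * l := by simp [hT]
        rw [hTcard, nsmul_eq_mul, ← ENNReal.ofReal_natCast (k*l),
          ← ENNReal.ofReal_mul (by positivity)]
        congr 1
        push_cast
        ring
      have hle : ENNReal.ofReal (((k : ℝ) * l) / 4^N) ≤ volume P := by
        rw [← hsum, ← hmeas]
        exact measure_mono hsub
      rw [ENNReal.ofReal_le_iff_le_toReal hPtop] at hle
      exact hle
    · -- UPPER BOUND
      set S := (Finset.range (4^N)).filter (fun m => pa N m ≤ k ∧ pb N m ≤ l) with hS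
      have hsubU : P ⊆ ⋃ m ∈ S, Icc ((m:ℝ)/4^N) (((m:ℝ)+1)/4^N) := by
        rintro x ⟨hxpre, hx01⟩
        obtain ⟨m, hm, hxm⟩ := hc_cover N hx01
        have hc := hIm N m hm x hxm
        have hxa : (cH x).1 ≤ a := hxpre.1
        have hxb : (cH x).2 ≤ b := hxpre.2
        have hpak : pa N m ≤ k := by
          apply Nat.le_floor
          have h1 : (pa N m : ℝ) / 2^N ≤ a := le_trans hc.1.1 hxa
          rw [div_le_iff₀ h2] at h1
          exact_mod_cast h1
        have hpbl : pb N m ≤ l := by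
          apply Nat.le_floor
          have h1 : (pb N m : ℝ) / 2^N ≤ b := le_trans hc.2.1 hxb
          rw [div_le_iff₀ h2] at h1
          exact_mod_cast h1
        simp only [mem_iUnion, exists_prop]
        exact ⟨m, by simp [hS, Finset.mem_filter, Finset.mem_range, hm, hpak, hpbl], hxm⟩
      have hcardS : S.card ≤ (k+1) * (l+1) := by
        have := Finset.card_le_card_of_injOn (f := fun m => (pa N m, pb N m))
          (s := S) (t := Finset.range (k+1) ×ˢ Finset.range (l+1))
          (by
            intro m hm
            simp only [Finset.mem_coe, hS, Finset.mem_filter, Finset.mem_range] at hm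
            simp only [Finset.mem_coe, Finset.mem_product, Finset.mem_range]
            omega)
          (by
            intro m hm m' hm' hmm
            simp only [Finset.mem_coe, hS, Finset.mem_filter, Finset.mem_range] at hm hm'
            simp only [Prod.mk.injEq] at hmm
            exact hinjF N m m' hm.1 hm'.1 hmm.1 hmm.2)
        simpa using this
      have hle : volume P ≤ ENNReal.ofReal ((((k:ℝ)+1) * ((l:ℝ)+1)) / 4^N) := by
        calc volume P ≤ volume (⋃ m ∈ S, Icc ((m:ℝ)/4^N) (((m:ℝ)+1)/4^N)) :=
              measure_mono hsubU
          _ ≤ ∑ m ∈ S, volume (Icc ((m:ℝ)/4^N) (((m:ℝ)+1)/4^N)) :=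
              measure_biUnion_finset_le S _
          _ = S.card • ENNReal.ofReal (1/4^N) := by
              rw [Finset.sum_congr rfl (fun m _ => ?_), Finset.sum_const]
              rw [Real.volume_Icc]
              congr 1
              field_simp
              ring
          _ ≤ ((k+1)*(l+1)) • ENNReal.ofReal (1/4^N) := by
              exact nsmul_le_nsmul_left (by positivity) hcardS
          _ = ENNReal.ofReal ((((k:ℝ)+1) * ((l:ℝ)+1)) / 4^N) := by
              rw [nsmul_eq_mul, ← ENNReal.ofReal_natCast ((k+1)*(l+1)),
                ← ENNReal.ofReal_mul (by positivity)]
              congr 1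
              push_cast
              ring
      exact ENNReal.toReal_le_of_le_ofReal (by positivity) hle
  -- limits
  have h2top : Tendsto (fun N : ℕ => (2:ℝ)^N) atTop atTop :=
    tendsto_pow_atTop_atTop_of_one_lt one_lt_two
  have hfa : Tendsto (fun N : ℕ => (⌊a * (2:ℝ)^N⌋₊ : ℝ) / 2^N) atTop (nhds a) :=
    (tendsto_nat_floor_mul_div_atTop ha.1).comp h2top
  have hfb : Tendsto (fun N : ℕ => (⌊b * (2:ℝ)^N⌋₊ : ℝ) / 2^N) atTop (nhds b) :=
    (tendsto_nat_floor_mul_div_atTop hb.1).comp h2top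
  have hinv : Tendsto (fun N : ℕ => ((2:ℝ)^N)⁻¹) atTop (nhds 0) :=
    tendsto_inv_atTop_zero.comp h2top
  have h42 : ∀ N : ℕ, ((4:ℝ))^N = 2^N * 2^N := by
    intro N; rw [← mul_pow]; norm_num
  have hlow : Tendsto (fun N : ℕ => ((⌊a * 2^N⌋₊ : ℝ) * ⌊b * 2^N⌋₊) / 4^N) atTop (nhds (a*b)) := by
    have : (fun N : ℕ => ((⌊a * 2^N⌋₊ : ℝ) * ⌊b * 2^N⌋₊) / 4^N)
        = fun N : ℕ => ((⌊a * (2:ℝ)^N⌋₊ : ℝ) / 2^N) * ((⌊b * (2:ℝ)^N⌋₊ : ℝ) / 2^N) := by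
      funext N
      rw [h42 N]
      ring
    rw [this]
    exact hfa.mul hfb
  have hhigh : Tendsto (fun N : ℕ => (((⌊a * 2^N⌋₊ : ℝ) + 1) * ((⌊b * 2^N⌋₊ : ℝ) + 1)) / 4^N)
      atTop (nhds (a*b)) := by
    have : (fun N : ℕ => (((⌊a * 2^N⌋₊ : ℝ) + 1) * ((⌊b * 2^N⌋₊ : ℝ) + 1)) / 4^N)
        = fun N : ℕ => ((⌊a * (2:ℝ)^N⌋₊ : ℝ) / 2^N + ((2:ℝ)^N)⁻¹)
            * ((⌊b * (2:ℝ)^N⌋₊ : ℝ) / 2^N + ((2:ℝ)^N)⁻¹) := by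
      funext N
      have h2 : ((2:ℝ)^N) ≠ 0 := by positivity
      rw [h42 N]
      field_simp
      try ring
    rw [this]
    have := (hfa.add hinv).mul (hfb.add hinv)
    simpa using this
  have hab_le : a * b ≤ v :=
    le_of_tendsto hlow (Eventually.of_forall (fun N => (hbound N).1))
  have hle_ab : v ≤ a * b :=
    ge_of_tendsto hhigh (Eventually.of_forall (fun N => (hbound N).2))
  have : v = a * b := le_antisymm hle_ab hab_le
  rw [← this, hv, ENNReal.ofReal_toReal hPtop]


/-- The Hilbert space-filling curve is measure-preserving: any continuous
surjection `c_H : [0,1] → [0,1]²` enjoying the dyadic property (each dyadic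
interval `[m/4ⁿ, (m+1)/4ⁿ]` is mapped onto a dyadic square of side `1/2ⁿ`)
pushes the Lebesgue probability measure on `[0,1]` forward to the Lebesgue
probability measure on `[0,1]²`; in particular
`μ₁(c_H⁻¹(E)) = μ₂(E)` for every Borel set `E ⊆ [0,1]²`. -/
theorem hilbert_curve_measure_preserving
    (cH : ℝ → ℝ × ℝ) (hcont : Continuous cH)
    (hsurj : cH '' Set.Icc (0:ℝ) 1 = Set.Icc (0:ℝ) 1 ×ˢ Set.Icc (0:ℝ) 1)
    (hdyadic : ∀ n m : ℕ, m < 4 ^ n →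
      ∃ a b : ℕ, a < 2 ^ n ∧ b < 2 ^ n ∧
        cH '' Set.Icc ((m : ℝ) / 4 ^ n) (((m : ℝ) + 1) / 4 ^ n)
          = Set.Icc ((a : ℝ) / 2 ^ n) (((a : ℝ) + 1) / 2 ^ n) ×ˢ
            Set.Icc ((b : ℝ) / 2 ^ n) (((b : ℝ) + 1) / 2 ^ n)) :
    Measure.map cH (volume.restrict (Set.Icc (0:ℝ) 1))
      = volume.restrict (Set.Icc (0:ℝ) 1 ×ˢ Set.Icc (0:ℝ) 1) ∧
    ∀ E : Set (ℝ × ℝ), MeasurableSet E → E ⊆ Set.Icc (0:ℝ) 1 ×ˢ Set.Icc (0:ℝ) 1 →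
      volume (cH ⁻¹' E ∩ Set.Icc (0:ℝ) 1) = volume E := by
  classical
  choose! pa pb hpa hpb himg using hdyadic
  have hmeas : Measurable cH := hcont.measurable
  have hkey : ∀ {a b : ℝ}, a ∈ Icc (0:ℝ) 1 → b ∈ Icc (0:ℝ) 1 →
      volume (cH ⁻¹' (Iic a ×ˢ Iic b) ∩ Icc (0:ℝ) 1) = ENNReal.ofReal (a * b) := by
    intro a b ha hb
    exact hc_key cH hsurj pa pb hpa hpb himg
      (fun N => (hc_surjF cH hsurj pa pb N hpa hpb himg).1)
      (fun N => (hc_surjF cH hsurj pa pb N hpa hpb himg).2) ha hb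
  have hmapsto : ∀ x ∈ Icc (0:ℝ) 1, cH x ∈ Icc (0:ℝ) 1 ×ˢ Icc (0:ℝ) 1 := by
    intro x hx
    rw [← hsurj]
    exact mem_image_of_mem _ hx
  have hIicCap : ∀ q : ℝ, 0 ≤ q → Iic q ∩ Icc (0:ℝ) 1 = Icc 0 (min q 1) := by
    intro q hq
    ext x
    simp only [mem_inter_iff, mem_Iic, mem_Icc, le_min_iff]
    constructor
    · rintro ⟨h1, h2, h3⟩; exact ⟨h2, h1, h3⟩
    · rintro ⟨h1, h2, h3⟩; exact ⟨h2, h1, h3⟩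
  have hmain : Measure.map cH (volume.restrict (Set.Icc (0:ℝ) 1))
      = volume.restrict (Set.Icc (0:ℝ) 1 ×ˢ Set.Icc (0:ℝ) 1) := by
    haveI hfin1 : IsFiniteMeasure (volume.restrict (Icc (0:ℝ) 1)) :=
      ⟨by rw [Measure.restrict_apply_univ]; simp [Real.volume_Icc]⟩
    haveI : IsFiniteMeasure (Measure.map cH (volume.restrict (Icc (0:ℝ) 1))) :=
      Measure.isFiniteMeasure_map _ _
    have hspan : IsCountablySpanning (range (Iic : ℝ → Set ℝ)) := by
      refine ⟨fun n => Iic (n : ℝ), fun n => mem_range_self _, ?_⟩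
      ext x
      simp only [mem_iUnion, mem_Iic, mem_univ, iff_true]
      exact exists_nat_ge x
    have hgen : (inferInstance : MeasurableSpace (ℝ × ℝ))
        = MeasurableSpace.generateFrom
            (image2 (· ×ˢ ·) (range (Iic : ℝ → Set ℝ)) (range (Iic : ℝ → Set ℝ))) := by
      rw [← generateFrom_prod_eq hspan hspan]
      have h1 : (inferInstance : MeasurableSpace ℝ)
          = MeasurableSpace.generateFrom (range (Iic : ℝ → Set ℝ)) :=
        (BorelSpace.measurable_eq (α := ℝ)).trans (borel_eq_generateFrom_Iic ℝ)
      rw [← h1]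
    have hpi : IsPiSystem (image2 (· ×ˢ ·) (range (Iic : ℝ → Set ℝ)) (range (Iic : ℝ → Set ℝ))) := by
      rintro _ ⟨_, ⟨q, rfl⟩, _, ⟨r, rfl⟩, rfl⟩ _ ⟨_, ⟨q', rfl⟩, _, ⟨r', rfl⟩, rfl⟩ -
      rw [prod_inter_prod, Iic_inter_Iic, Iic_inter_Iic]
      exact mem_image2_of_mem (mem_range_self _) (mem_range_self _)
    refine ext_of_generate_finite _ hgen hpi ?_ ?_
    · rintro _ ⟨_, ⟨q, rfl⟩, _, ⟨r, rfl⟩, rfl⟩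
      have hms : MeasurableSet (Iic q ×ˢ Iic r : Set (ℝ × ℝ)) :=
        measurableSet_Iic.prod measurableSet_Iic
      rw [Measure.map_apply hmeas hms, Measure.restrict_apply (hmeas hms),
        Measure.restrict_apply hms]
      rcases lt_or_ge q 0 with hq | hq
      · have h1 : cH ⁻¹' (Iic q ×ˢ Iic r) ∩ Icc (0:ℝ) 1 = ∅ := by
          ext x
          simp only [mem_inter_iff, mem_preimage, mem_prod, mem_Iic,
            mem_empty_iff_false, iff_false, not_and]
          rintro ⟨hx1, _⟩ hx
          have := (hmapsto x hx).1.1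
          linarith
        have h2 : (Iic q ×ˢ Iic r) ∩ (Icc (0:ℝ) 1 ×ˢ Icc (0:ℝ) 1) = ∅ := by
          rw [eq_empty_iff_forall_notMem]
          rintro z ⟨⟨hz1, -⟩, hz2, -⟩
          have : (0:ℝ) ≤ z.1 := hz2.1
          have : z.1 ≤ q := hz1
          linarith
        rw [h1, h2]
        simp
      · rcases lt_or_ge r 0 with hr | hr
        · have h1 : cH ⁻¹' (Iic q ×ˢ Iic r) ∩ Icc (0:ℝ) 1 = ∅ := by
            ext x
            simp only [mem_inter_iff, mem_preimage, mem_prod, mem_Iic,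
              mem_empty_iff_false, iff_false, not_and]
            rintro ⟨_, hx2⟩ hx
            have := (hmapsto x hx).2.1
            linarith
          have h2 : (Iic q ×ˢ Iic r) ∩ (Icc (0:ℝ) 1 ×ˢ Icc (0:ℝ) 1) = ∅ := by
            rw [eq_empty_iff_forall_notMem]
            rintro z ⟨⟨-, hz1⟩, -, hz2⟩
            have : (0:ℝ) ≤ z.2 := hz2.1
            have : z.2 ≤ r := hz1
            linarith
          rw [h1, h2]
          simp
        · set a := min q 1 with hadef
          set b := min r 1 with hbdef
          have ha : a ∈ Icc (0:ℝ) 1 := ⟨le_min hq zero_le_one, min_le_right _ _⟩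
          have hb : b ∈ Icc (0:ℝ) 1 := ⟨le_min hr zero_le_one, min_le_right _ _⟩
          have h1 : cH ⁻¹' (Iic q ×ˢ Iic r) ∩ Icc (0:ℝ) 1
              = cH ⁻¹' (Iic a ×ˢ Iic b) ∩ Icc (0:ℝ) 1 := by
            ext x
            simp only [mem_inter_iff, mem_preimage, mem_prod, mem_Iic]
            constructor
            · rintro ⟨⟨hx1, hx2⟩, hx⟩
              exact ⟨⟨le_min hx1 (hmapsto x hx).1.2, le_min hx2 (hmapsto x hx).2.2⟩, hx⟩
            · rintro ⟨⟨hx1, hx2⟩, hx⟩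
              exact ⟨⟨le_trans hx1 (min_le_left _ _), le_trans hx2 (min_le_left _ _)⟩, hx⟩
          have h2 : (Iic q ×ˢ Iic r) ∩ (Icc (0:ℝ) 1 ×ˢ Icc (0:ℝ) 1)
              = Icc (0:ℝ) a ×ˢ Icc (0:ℝ) b := by
            rw [prod_inter_prod, hIicCap q hq, hIicCap r hr]
          rw [h1, hkey ha hb, h2, Measure.volume_eq_prod, Measure.prod_prod,
            Real.volume_Icc, Real.volume_Icc, sub_zero, sub_zero,
            ← ENNReal.ofReal_mul ha.1]
    · rw [Measure.map_apply hmeas MeasurableSet.univ, preimage_univ,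
        Measure.restrict_apply_univ, Measure.restrict_apply_univ,
        Measure.volume_eq_prod, Measure.prod_prod, Real.volume_Icc]
      simp
  refine ⟨hmain, ?_⟩
  intro E hE hEsub
  calc volume (cH ⁻¹' E ∩ Icc (0:ℝ) 1)
      = (volume.restrict (Icc (0:ℝ) 1)) (cH ⁻¹' E) :=
        (Measure.restrict_apply (hmeas hE)).symm
    _ = (Measure.map cH (volume.restrict (Icc (0:ℝ) 1))) E :=
        (Measure.map_apply hmeas hE).symm
    _ = (volume.restrict (Icc (0:ℝ) 1 ×ˢ Icc (0:ℝ) 1)) E := by rw [hmain]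
    _ = volume (E ∩ (Icc (0:ℝ) 1 ×ˢ Icc (0:ℝ) 1)) := Measure.restrict_apply hE
    _ = volume E := by rw [inter_eq_self_of_subset_left hEsub]
end
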